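/- arXiv:1807.02025 — 2 statements merged into one kernel-verified Lean document; each statement's English description precedes it below -/
import Mathlib

section
/- Let λ₁ > 0, λ₂ ≠ 0 with ε₁ = 16π·λ₁²/λ₂². Let W, A > 0, V be reals with W ≥ 8π, |V| ≤ A^{3/2}/(6√π), A ≤ ε₁, and W + λ₁A + λ₂V ≤ E₀ where E₀ < 8π + 16π·λ₁³/(3λ₂²). Then A ≤ (3/λ₁)(E₀ - 8π) < ε₁. -/
open Real

theorem stmt9 (lam1 lam2 W A V E0 : ℝ) (hlam1 : 0 < lam1) (hlam2 : lam2 ≠ 0)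
    (hA : 0 < A) (hW : 8 * π ≤ W)
    (hiso : |V| ≤ A ^ ((3:ℝ)/2) / (6 * Real.sqrt π))
    (hAbound : A ≤ 16 * π * lam1^2 / lam2^2)
    (hE : W + lam1 * A + lam2 * V ≤ E0)
    (hE0 : E0 < 8 * π + 16 * π * lam1^3 / (3 * lam2^2)) :
    A ≤ (3 / lam1) * (E0 - 8 * π) ∧ (3 / lam1) * (E0 - 8 * π) < 16 * π * lam1^2 / lam2^2 := by
  have hpi : (0:ℝ) < π := Real.pi_pos
  have hp : 0 < Real.sqrt π := Real.sqrt_pos.mpr hpi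
  have hp2 : Real.sqrt π ^ 2 = π := Real.sq_sqrt hpi.le
  have hs : 0 < Real.sqrt A := Real.sqrt_pos.mpr hA
  have hs2 : Real.sqrt A ^ 2 = A := Real.sq_sqrt hA.le
  have hl2 : 0 < lam2 ^ 2 := by positivity
  have habs : 0 < |lam2| := abs_pos.mpr hlam2
  have habs2 : |lam2| ^ 2 = lam2 ^ 2 := sq_abs lam2
  have hA' : A * lam2 ^ 2 ≤ 16 * π * lam1 ^ 2 := (le_div_iff₀ hl2).mp hAbound
  have h32 : A ^ ((3:ℝ)/2) = A * Real.sqrt A := by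
    rw [show ((3:ℝ)/2) = 1 + 1/2 by norm_num, Real.rpow_add hA, Real.rpow_one,
      Real.sqrt_eq_rpow]
  have hkey : |lam2| * Real.sqrt A ≤ 4 * Real.sqrt π * lam1 := by
    nlinarith [mul_pos habs hs, mul_pos (mul_pos (by norm_num : (0:ℝ)<4) hp) hlam1,
      sq_nonneg (|lam2| * Real.sqrt A - 4 * Real.sqrt π * lam1),
      sq_nonneg (|lam2| * Real.sqrt A + 4 * Real.sqrt π * lam1)]
  have hV : -(2/3 * lam1 * A) ≤ lam2 * V := by
    have h1 : |lam2 * V| ≤ |lam2| * (A * Real.sqrt A / (6 * Real.sqrt π)) := by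
      rw [abs_mul]
      exact mul_le_mul_of_nonneg_left (by rw [← h32]; exact hiso) habs.le
    have h2 : |lam2| * (A * Real.sqrt A / (6 * Real.sqrt π)) ≤ 2/3 * lam1 * A := by
      rw [mul_div_assoc', div_le_iff₀ (by positivity)]
      nlinarith [mul_le_mul_of_nonneg_left hkey hA.le]
    nlinarith [neg_abs_le (lam2 * V)]
  have hmain : lam1 * A / 3 ≤ E0 - 8 * π := by nlinarith
  have hE0' : (E0 - 8 * π) * (3 * lam2 ^ 2) < 16 * π * lam1 ^ 3 :=
    (lt_div_iff₀ (by positivity)).mp (by linarith)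
  constructor
  · rw [div_mul_eq_mul_div, le_div_iff₀ hlam1]
    nlinarith
  · rw [div_mul_eq_mul_div, div_lt_div_iff₀ hlam1 hl2]
    linarith [hE0']
end

section
/- Let g, W, A, D, λ₁ > 0, λ₂ ∈ ℝ, V ∈ ℝ satisfy 2λ₁A + 3λ₂V ≤ g·D·√A, D ≤ (2/π)√(A·W), and |V| ≤ A^{3/2}/(6√π). If A ≤ 16π·λ₁²/λ₂² (λ₂ ≠ 0), then g² ≥ π²(λ₁ - |λ₂|√A/(4√π))²/W. -/
set_option maxHeartbeats 800000
open Real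

theorem stmt12 (g W A D lam1 lam2 V : ℝ) (hg : 0 < g) (hW : 0 < W) (hA : 0 < A)
    (hD : 0 < D) (hlam1 : 0 < lam1) (hlam2 : lam2 ≠ 0)
    (h1 : 2 * lam1 * A + 3 * lam2 * V ≤ g * D * Real.sqrt A)
    (h2 : D ≤ (2 / π) * Real.sqrt (A * W))
    (hiso : |V| ≤ A ^ ((3:ℝ)/2) / (6 * Real.sqrt π))
    (hAbound : A ≤ 16 * π * lam1^2 / lam2^2) :
    g^2 ≥ π^2 * (lam1 - |lam2| * Real.sqrt A / (4 * Real.sqrt π))^2 / W := by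
  have hπ : (0:ℝ) < π := Real.pi_pos
  set s := Real.sqrt A with hs
  have hs0 : 0 < s := Real.sqrt_pos.mpr hA
  have hsA : s ^ 2 = A := Real.sq_sqrt hA.le
  set p := Real.sqrt π with hp
  have hp0 : 0 < p := Real.sqrt_pos.mpr hπ
  have hpπ : p ^ 2 = π := Real.sq_sqrt hπ.le
  set w := Real.sqrt W with hw
  have hw0 : 0 < w := Real.sqrt_pos.mpr hW
  have hwW : w ^ 2 = W := Real.sq_sqrt hW.le
  have hq : Real.sqrt (A * W) = s * w := Real.sqrt_mul hA.le W
  have hA32 : A ^ ((3:ℝ)/2) = s ^ 3 := by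
    rw [hs, Real.sqrt_eq_rpow, ← Real.rpow_natCast (A ^ ((1:ℝ)/2)) 3,
      ← Real.rpow_mul hA.le]
    norm_num
  clear_value s p w
  -- bound on lam2 * V
  have habs : -(|lam2| * (s ^ 3 / (6 * p))) ≤ lam2 * V := by
    have h1' : -(|lam2| * |V|) ≤ lam2 * V := by
      rw [← abs_mul]; exact neg_abs_le _
    have h2' : |lam2| * |V| ≤ |lam2| * (s ^ 3 / (6 * p)) := by
      apply mul_le_mul_of_nonneg_left _ (abs_nonneg _)
      rw [← hA32]; exact hiso
    linarith
  -- bound g * D * s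
  have hDs : g * D * s ≤ 2 / π * (s * w) * g * s := by
    have : g * D ≤ g * (2 / π * (s * w)) := by
      apply mul_le_mul_of_nonneg_left _ hg.le
      rw [← hq]; exact h2
    nlinarith [hs0.le]
  -- main linear inequality multiplied by s^2
  have hlin : (4 * p * π * lam1 - π * |lam2| * s) * s ^ 2 ≤ 4 * p * (g * w) * s ^ 2 := by
    have hchain : 2 * lam1 * s ^ 2 + 3 * lam2 * V ≤ 2 / π * (s * w) * g * s := by
      rw [hsA]; exact le_trans h1 hDs
    -- multiply hchain by 2 * p * π > 0
    have hmul : 2 * p * π * (2 * lam1 * s ^ 2 + 3 * lam2 * V)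
        ≤ 2 * p * π * (2 / π * (s * w) * g * s) := by
      apply mul_le_mul_of_nonneg_left hchain (by positivity)
    have heq : 2 * p * π * (2 / π * (s * w) * g * s) = 4 * p * (g * w) * s ^ 2 := by
      field_simp; ring
    rw [heq] at hmul
    -- use habs multiplied by 6 * p * π
    have habs' : -(π * |lam2| * s ^ 3) ≤ 6 * p * π * (lam2 * V) := by
      have := mul_le_mul_of_nonneg_left habs (by positivity : (0:ℝ) ≤ 6 * p * π)
      have heq2 : 6 * p * π * -(|lam2| * (s ^ 3 / (6 * p))) = -(π * |lam2| * s ^ 3) := by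
        field_simp
      linarith [heq2 ▸ this]
    nlinarith [hmul, habs']
  have hlin2 : 4 * p * π * lam1 - π * |lam2| * s ≤ 4 * p * (g * w) :=
    le_of_mul_le_mul_right (by nlinarith [hlin]) (by positivity : (0:ℝ) < s ^ 2)
  -- π * key ≤ g * w
  have h5 : π * (lam1 - |lam2| * s / (4 * p)) ≤ g * w := by
    have hd : (4 * p * π * lam1 - π * |lam2| * s) / (4 * p) ≤ 4 * p * (g * w) / (4 * p) :=
      div_le_div_of_nonneg_right hlin2 (by positivity)
    have e1 : (4 * p * π * lam1 - π * |lam2| * s) / (4 * p)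
        = π * (lam1 - |lam2| * s / (4 * p)) := by field_simp
    have e2 : 4 * p * (g * w) / (4 * p) = g * w := by field_simp
    rw [e1, e2] at hd; exact hd
  -- key nonneg
  have hkeynn : 0 ≤ lam1 - |lam2| * s / (4 * p) := by
    have hl2 : 0 < |lam2| := abs_pos.mpr hlam2
    have hsq : (|lam2| * s) ^ 2 ≤ (4 * p * lam1) ^ 2 := by
      have : lam2 ^ 2 * A ≤ 16 * π * lam1 ^ 2 := by
        rw [div_eq_mul_inv] at hAbound
        have h2pos : (0:ℝ) < lam2 ^ 2 := by positivity
        calc lam2 ^ 2 * A ≤ lam2 ^ 2 * (16 * π * lam1 ^ 2 * (lam2 ^ 2)⁻¹) :=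
              mul_le_mul_of_nonneg_left hAbound h2pos.le
          _ = 16 * π * lam1 ^ 2 := by field_simp
      calc (|lam2| * s) ^ 2 = lam2 ^ 2 * A := by rw [mul_pow, sq_abs, hsA]
        _ ≤ 16 * π * lam1 ^ 2 := this
        _ = (4 * p * lam1) ^ 2 := by rw [← hpπ]; ring
    have hle : |lam2| * s ≤ 4 * p * lam1 :=
      (pow_le_pow_iff_left₀ (by positivity) (by positivity) two_ne_zero).mp hsq
    rw [sub_nonneg, div_le_iff₀ (by positivity : (0:ℝ) < 4 * p)]
    linarith
  -- conclude
  rw [ge_iff_le, div_le_iff₀ hW]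
  have hsq2 : (π * (lam1 - |lam2| * s / (4 * p))) ^ 2 ≤ (g * w) ^ 2 := by
    have h0 : 0 ≤ π * (lam1 - |lam2| * s / (4 * p)) := by positivity
    nlinarith [h5, h0]
  calc π ^ 2 * (lam1 - |lam2| * s / (4 * p)) ^ 2
      = (π * (lam1 - |lam2| * s / (4 * p))) ^ 2 := by ring
    _ ≤ (g * w) ^ 2 := hsq2
    _ = g ^ 2 * W := by rw [← hwW]; ring
end
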